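/- Let q ∈ (0,1), α, β ∈ ℂ with |α| < 1, z ∈ ℂ∖{0}, and let ψ_n^±(z) = z^{±n}(qz^{±2};q)_∞ · ₂φ₁(z^{±1}τ, z^{±1}τ^{-1}; qz^{±2}; q, αq^{n+1}) where ατ + ατ⁻¹ = βz + βz⁻¹. Then the Wronskian W = ψ_n^+(z)ψ_{n+1}^-(z) - ψ_{n+1}^+(z)ψ_n^-(z) is independent of n and equals z⁻¹(z²;q)_∞(qz⁻²;q)_∞. -/

import Mathlib

/-- The finite q-Pochhammer symbol `(a;Q)_n = ∏_{j=0}^{n-1} (1 - a Q^j)`. -/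
def qPoch (a Q : ℂ) (n : ℕ) : ℂ := ∏ j ∈ Finset.range n, (1 - a * Q ^ j)

/-- The infinite q-Pochhammer symbol `(a;Q)_∞ = ∏_{j=0}^{∞} (1 - a Q^j)`. -/
noncomputable def qPochInf (a Q : ℂ) : ℂ := ∏' j : ℕ, (1 - a * Q ^ j)

/-- `ψ_n(w) = w^n (Q w²;Q)_∞ ₂φ₁(wτ, wτ⁻¹; Qw²; Q, α Q^{n+1})`; for `w = z` this is `ψ_n^+`
and for `w = z⁻¹` this is `ψ_n^-`. -/
noncomputable def psiAux (Q α w τ : ℂ) (n : ℤ) : ℂ :=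
  w ^ n * qPochInf (Q * w ^ 2) Q *
    ∑' k : ℕ, qPoch (w * τ) Q k * qPoch (w * τ⁻¹) Q k /
      (qPoch (Q * w ^ 2) Q k * qPoch Q Q k) * (α * Q ^ (n + 1)) ^ k

open Filter Finset Complex

noncomputable def cseq (Q τ w : ℂ) (k : ℕ) : ℂ :=
  qPoch (w * τ) Q k * qPoch (w * τ⁻¹) Q k / (qPoch (Q * w ^ 2) Q k * qPoch Q Q k)

noncomputable def Sfun (Q τ w x : ℂ) : ℂ := ∑' k : ℕ, cseq Q τ w k * x ^ k

lemma qPoch_zero (a Q : ℂ) : qPoch a Q 0 = 1 := by simp [qPoch]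

lemma qPoch_succ (a Q : ℂ) (k : ℕ) : qPoch a Q (k+1) = qPoch a Q k * (1 - a * Q ^ k) :=
  Finset.prod_range_succ _ _

lemma qPoch_ne_zero {a Q : ℂ} (h : ∀ j : ℕ, 1 - a * Q ^ j ≠ 0) (k : ℕ) : qPoch a Q k ≠ 0 :=
  Finset.prod_ne_zero_iff.2 fun j _ => h j

lemma one_sub_ne_zero_of_norm_lt {x : ℂ} (h : ‖x‖ < 1) : (1 : ℂ) - x ≠ 0 := by
  intro hx
  have : x = 1 := by linear_combination -hx
  rw [this] at h; simp at h

lemma norm_qPoch_le {Q : ℂ} (hQ : ‖Q‖ < 1) (a : ℂ) (k : ℕ) :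
    ‖qPoch a Q k‖ ≤ Real.exp (‖a‖ / (1 - ‖Q‖)) := by
  have hQ0 : (0:ℝ) ≤ ‖Q‖ := norm_nonneg _
  calc ‖qPoch a Q k‖ ≤ ∏ j ∈ range k, ‖1 - a * Q ^ j‖ := norm_prod_le _ _
    _ ≤ ∏ j ∈ range k, Real.exp (‖a‖ * ‖Q‖ ^ j) := by
        apply Finset.prod_le_prod (fun _ _ => norm_nonneg _)
        intro j _
        calc ‖1 - a * Q ^ j‖ ≤ ‖(1:ℂ)‖ + ‖a * Q ^ j‖ := norm_sub_le _ _
          _ = 1 + ‖a‖ * ‖Q‖ ^ j := by simp [norm_mul, norm_pow]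
          _ ≤ Real.exp (‖a‖ * ‖Q‖ ^ j) := by
              have := Real.add_one_le_exp (‖a‖ * ‖Q‖ ^ j)
              linarith
    _ = Real.exp (∑ j ∈ range k, ‖a‖ * ‖Q‖ ^ j) := by rw [Real.exp_sum]
    _ ≤ Real.exp (‖a‖ / (1 - ‖Q‖)) := by
        apply Real.exp_le_exp.2
        rw [← Finset.mul_sum]
        have h1 : ∑ j ∈ range k, ‖Q‖ ^ j ≤ (1 - ‖Q‖)⁻¹ :=
          Summable.sum_le_tsum _ (fun _ _ => by positivity)
            (summable_geometric_of_lt_one hQ0 hQ) |>.trans_eq (tsum_geometric_of_lt_one hQ0 hQ)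
        calc ‖a‖ * ∑ j ∈ range k, ‖Q‖ ^ j ≤ ‖a‖ * (1 - ‖Q‖)⁻¹ :=
              mul_le_mul_of_nonneg_left h1 (norm_nonneg _)
          _ = ‖a‖ / (1 - ‖Q‖) := by rw [div_eq_mul_inv]

lemma summable_log_qPoch {Q : ℂ} (hQ : ‖Q‖ < 1) (a : ℂ) :
    Summable fun j : ℕ => Complex.log (1 - a * Q ^ j) := by
  apply Summable.of_norm_bounded_eventually (g := fun j => 3/2 * (‖a‖ * ‖Q‖ ^ j))
  · exact ((summable_geometric_of_lt_one (norm_nonneg _) hQ).mul_left _).mul_left _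
  · rw [Nat.cofinite_eq_atTop]
    have h0 : Tendsto (fun j : ℕ => ‖a‖ * ‖Q‖ ^ j) atTop (nhds 0) := by
      have := tendsto_pow_atTop_nhds_zero_of_lt_one (norm_nonneg Q) hQ
      simpa using this.const_mul ‖a‖
    filter_upwards [h0.eventually_le_const (by norm_num : (0:ℝ) < 1/2)] with j hj
    have : ‖-(a * Q ^ j)‖ ≤ 1/2 := by simpa [norm_mul, norm_pow] using hj
    calc ‖Complex.log (1 - a * Q ^ j)‖ = ‖Complex.log (1 + -(a * Q ^ j))‖ := by ring_nf
      _ ≤ 3/2 * ‖-(a * Q ^ j)‖ := Complex.norm_log_one_add_half_le_self this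
      _ ≤ 3/2 * (‖a‖ * ‖Q‖ ^ j) := by simp [norm_mul, norm_pow]

lemma hasProd_zero_of_eq_zero {f : ℕ → ℂ} (j0 : ℕ) (h : f j0 = 0) : HasProd f 0 := by
  unfold HasProd
  apply Tendsto.congr' _ tendsto_const_nhds
  filter_upwards [eventually_ge_atTop ({j0} : Finset ℕ)] with s hs
  exact (Finset.prod_eq_zero (hs (Finset.mem_singleton_self j0)) h).symm

lemma tprod_eq_zero {f : ℕ → ℂ} (j0 : ℕ) (h : f j0 = 0) : ∏' j, f j = 0 :=
  (hasProd_zero_of_eq_zero j0 h).tprod_eq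

lemma multipliable_qPoch {Q : ℂ} (hQ : ‖Q‖ < 1) (a : ℂ) :
    Multipliable fun j : ℕ => 1 - a * Q ^ j := by
  by_cases h : ∀ j : ℕ, 1 - a * Q ^ j ≠ 0
  · exact Complex.multipliable_of_summable_log
      (summable_log_qPoch hQ a)
  · push_neg at h
    obtain ⟨j0, hj0⟩ := h
    exact ⟨0, hasProd_zero_of_eq_zero j0 hj0⟩

lemma tendsto_qPoch {Q : ℂ} (hQ : ‖Q‖ < 1) (a : ℂ) :
    Tendsto (fun k => qPoch a Q k) atTop (nhds (qPochInf a Q)) :=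
  (multipliable_qPoch hQ a).hasProd.tendsto_prod_nat

lemma qPochInf_ne_zero {Q : ℂ} (hQ : ‖Q‖ < 1) {a : ℂ} (h : ∀ j : ℕ, 1 - a * Q ^ j ≠ 0) :
    qPochInf a Q ≠ 0 := by
  have := Complex.cexp_tsum_eq_tprod (f := fun j => 1 - a * Q ^ j)
    (fun j => h j) (summable_log_qPoch hQ a)
  rw [qPochInf, ← this]
  exact Complex.exp_ne_zero _

lemma qPoch_lower_bound {Q : ℂ} (hQ : ‖Q‖ < 1) {a : ℂ} (h : ∀ j : ℕ, 1 - a * Q ^ j ≠ 0) :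
    ∃ ε > 0, ∀ k, ε ≤ ‖qPoch a Q k‖ := by
  have hL : 0 < ‖qPochInf a Q‖ := norm_pos_iff.2 (qPochInf_ne_zero hQ h)
  have hpos : ∀ k, 0 < ‖qPoch a Q k‖ := fun k =>
    norm_pos_iff.2 (Finset.prod_ne_zero_iff.2 fun j _ => h j)
  have hconv : Tendsto (fun k => ‖qPoch a Q k‖) atTop (nhds ‖qPochInf a Q‖) :=
    (tendsto_qPoch hQ a).norm
  obtain ⟨N, hN⟩ := eventually_atTop.mp (hconv.eventually (eventually_ge_nhds (half_lt_self hL)))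
  refine ⟨min (‖qPochInf a Q‖/2) ((Finset.range (N+1)).inf' ⟨0, by simp⟩
    fun k => ‖qPoch a Q k‖), ?_, ?_⟩
  · apply lt_min (half_pos hL)
    apply (Finset.lt_inf'_iff _).2
    exact fun k _ => hpos k
  · intro k
    rcases le_or_gt k N with hk | hk
    · exact (min_le_right _ _).trans (Finset.inf'_le _ (Finset.mem_range.2 (by omega)))
    · exact (min_le_left _ _).trans (hN k hk.le)

lemma qPochInf_split {Q : ℂ} (hQ : ‖Q‖ < 1) (a : ℂ) :
    qPochInf a Q = (1 - a) * qPochInf (a * Q) Q := by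
  have hm : Multipliable fun n : ℕ => (1 : ℂ) - a * Q ^ (n + 1) := by
    have h2 := multipliable_qPoch hQ (a * Q)
    apply h2.congr
    intro n
    ring
  rw [qPochInf, tprod_eq_zero_mul' (f := fun j : ℕ => 1 - a * Q ^ j) hm]
  congr 1
  · simp
  · rw [qPochInf]
    exact tprod_congr fun n => by ring

lemma hQQ_ne {Q : ℂ} (hQ : ‖Q‖ < 1) (j : ℕ) : (1:ℂ) - Q * Q ^ j ≠ 0 := by
  apply one_sub_ne_zero_of_norm_lt
  rw [norm_mul, norm_pow]
  have h1 : ‖Q‖ ^ j ≤ 1 := pow_le_one₀ (norm_nonneg _) hQ.le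
  nlinarith [norm_nonneg Q]

lemma cseq_zero (Q τ w : ℂ) : cseq Q τ w 0 = 1 := by simp [cseq, qPoch_zero]

lemma cseq_bound {Q : ℂ} (hQ : ‖Q‖ < 1) (τ w : ℂ)
    (hden : ∀ j : ℕ, 1 - (Q * w ^ 2) * Q ^ j ≠ 0) :
    ∃ M > 0, ∀ k, ‖cseq Q τ w k‖ ≤ M := by
  obtain ⟨ε₁, hε₁, h₁⟩ := qPoch_lower_bound hQ hden
  obtain ⟨ε₂, hε₂, h₂⟩ := qPoch_lower_bound hQ (fun j => hQQ_ne hQ j)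
  set E₁ := Real.exp (‖w * τ‖ / (1 - ‖Q‖))
  set E₂ := Real.exp (‖w * τ⁻¹‖ / (1 - ‖Q‖))
  refine ⟨E₁ * E₂ / (ε₁ * ε₂), by positivity, fun k => ?_⟩
  rw [cseq, norm_div, norm_mul, norm_mul]
  apply div_le_div₀ (by positivity)
  · exact mul_le_mul (norm_qPoch_le hQ _ k) (norm_qPoch_le hQ _ k) (norm_nonneg _)
      (Real.exp_pos _).le
  · positivity
  · exact mul_le_mul (h₁ k) (h₂ k) hε₂.le (norm_nonneg _)

lemma cseq_rec {Q : ℂ} (hQ : ‖Q‖ < 1) {τ w : ℂ}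
    (hden : ∀ j : ℕ, 1 - (Q * w ^ 2) * Q ^ j ≠ 0) (k : ℕ) :
    cseq Q τ w (k+1) * ((1 - Q * Q ^ k) * (1 - (Q * w ^ 2) * Q ^ k)) =
      cseq Q τ w k * ((1 - w * τ * Q ^ k) * (1 - w * τ⁻¹ * Q ^ k)) := by
  have hD1 : qPoch (Q * w ^ 2) Q k ≠ 0 := qPoch_ne_zero hden k
  have hD2 : qPoch Q Q k ≠ 0 := qPoch_ne_zero (hQQ_ne hQ) k
  have hF1 : (1:ℂ) - (Q * w ^ 2) * Q ^ k ≠ 0 := hden k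
  have hF2 : (1:ℂ) - Q * Q ^ k ≠ 0 := hQQ_ne hQ k
  rw [cseq, cseq, qPoch_succ, qPoch_succ, qPoch_succ, qPoch_succ]
  rw [div_mul_eq_mul_div, div_mul_eq_mul_div, div_eq_div_iff (mul_ne_zero (mul_ne_zero hD1 hF1) (mul_ne_zero hD2 hF2)) (mul_ne_zero hD1 hD2)]
  ring

lemma summable_aux {f : ℕ → ℂ} {M : ℝ} (hM : ∀ k, ‖f k‖ ≤ M) {x : ℂ} (hx : ‖x‖ < 1) :
    Summable fun k => f k * x ^ k :=
  Summable.of_norm_bounded (g := fun k => M * ‖x‖ ^ k)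
    ((summable_geometric_of_lt_one (norm_nonneg _) hx).mul_left M)
    (fun k => by
      rw [norm_mul, norm_pow]
      exact mul_le_mul_of_nonneg_right (hM k) (by positivity))

lemma func_eq {Q : ℂ} (hQ : ‖Q‖ < 1) {τ w : ℂ} (hτ : τ ≠ 0)
    (hden : ∀ j : ℕ, 1 - (Q * w ^ 2) * Q ^ j ≠ 0) {y : ℂ} (hy : ‖y‖ < 1) :
    (1 - y) * (Sfun Q τ w y + w ^ 2 * Sfun Q τ w (Q ^ 2 * y)) =
      ((w ^ 2 + 1) - w * (τ + τ⁻¹) * y) * Sfun Q τ w (Q * y) := by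
  obtain ⟨M, hM0, hM⟩ := cseq_bound hQ τ w hden
  set c : ℕ → ℂ := cseq Q τ w with hc
  have hQ1 : ∀ k : ℕ, ‖(Q ^ 2) ^ k‖ ≤ 1 := fun k => by
    rw [norm_pow, norm_pow]
    exact pow_le_one₀ (by positivity) (pow_le_one₀ (norm_nonneg _) hQ.le)
  have hQ1' : ∀ k : ℕ, ‖(Q : ℂ) ^ k‖ ≤ 1 := fun k => by
    rw [norm_pow]; exact pow_le_one₀ (norm_nonneg _) hQ.le
  have hQy : ‖Q * y‖ < 1 := by
    rw [norm_mul]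
    nlinarith [norm_nonneg Q, norm_nonneg y]
  have hQ2y : ‖Q ^ 2 * y‖ < 1 := by
    rw [norm_mul, norm_pow]
    nlinarith [norm_nonneg Q, norm_nonneg y]
  have h1 : Summable fun k => c k * y ^ k := summable_aux hM hy
  have h2 : Summable fun k => c k * (Q ^ 2 * y) ^ k := summable_aux hM hQ2y
  have h3 : Summable fun k => c k * (Q * y) ^ k := summable_aux hM hQy
  set P : ℕ → ℂ := fun k => c k * (1 + w ^ 2 * (Q ^ 2) ^ k - (w ^ 2 + 1) * Q ^ k) with hP
  set R : ℕ → ℂ := fun k => c k * (1 + w ^ 2 * (Q ^ 2) ^ k - w * (τ + τ⁻¹) * Q ^ k) with hR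
  have hPb : ∀ k, ‖P k‖ ≤ M * (1 + ‖w ^ 2‖ + ‖w ^ 2 + 1‖) := by
    intro k
    rw [hP]
    simp only []
    rw [norm_mul]
    have hb : ‖1 + w ^ 2 * (Q ^ 2) ^ k - (w ^ 2 + 1) * Q ^ k‖ ≤ 1 + ‖w ^ 2‖ + ‖w ^ 2 + 1‖ := by
      calc ‖1 + w ^ 2 * (Q ^ 2) ^ k - (w ^ 2 + 1) * Q ^ k‖
          ≤ ‖1 + w ^ 2 * (Q ^ 2) ^ k‖ + ‖(w ^ 2 + 1) * Q ^ k‖ := norm_sub_le _ _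
        _ ≤ (‖(1 : ℂ)‖ + ‖w ^ 2 * (Q ^ 2) ^ k‖) + ‖(w ^ 2 + 1) * Q ^ k‖ := by
            gcongr
            exact norm_add_le _ _
        _ ≤ (1 + ‖w ^ 2‖ * 1) + ‖w ^ 2 + 1‖ * 1 := by
            rw [norm_one, norm_mul, norm_mul]
            gcongr
            exacts [hQ1 k, hQ1' k]
        _ = 1 + ‖w ^ 2‖ + ‖w ^ 2 + 1‖ := by ring
    exact mul_le_mul (hM k) hb (norm_nonneg _) hM0.le
  have hRb : ∀ k, ‖R k‖ ≤ M * (1 + ‖w ^ 2‖ + ‖w * (τ + τ⁻¹)‖) := by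
    intro k
    rw [hR]
    simp only []
    rw [norm_mul]
    have hb : ‖1 + w ^ 2 * (Q ^ 2) ^ k - w * (τ + τ⁻¹) * Q ^ k‖ ≤ 1 + ‖w ^ 2‖ + ‖w * (τ + τ⁻¹)‖ := by
      calc ‖1 + w ^ 2 * (Q ^ 2) ^ k - w * (τ + τ⁻¹) * Q ^ k‖
          ≤ ‖1 + w ^ 2 * (Q ^ 2) ^ k‖ + ‖w * (τ + τ⁻¹) * Q ^ k‖ := norm_sub_le _ _
        _ ≤ (‖(1 : ℂ)‖ + ‖w ^ 2 * (Q ^ 2) ^ k‖) + ‖w * (τ + τ⁻¹) * Q ^ k‖ := by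
            gcongr
            exact norm_add_le _ _
        _ ≤ (1 + ‖w ^ 2‖ * 1) + ‖w * (τ + τ⁻¹)‖ * 1 := by
            rw [norm_one, norm_mul, norm_mul]
            gcongr
            exacts [hQ1 k, hQ1' k]
        _ = 1 + ‖w ^ 2‖ + ‖w * (τ + τ⁻¹)‖ := by ring
    exact mul_le_mul (hM k) hb (norm_nonneg _) hM0.le
  have hPsum : Summable fun k => P k * y ^ k := summable_aux hPb hy
  have hRsum : Summable fun k => R k * y ^ k := summable_aux hRb hy
  have key : ∑' k, P k * y ^ k = (∑' k, R k * y ^ k) * y := by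
    rw [Summable.tsum_eq_zero_add hPsum]
    have hP0 : P 0 * y ^ 0 = 0 := by
      have h0 : c 0 = 1 := cseq_zero Q τ w
      rw [hP]
      simp only [pow_zero, mul_one, h0]
      ring
    have hstep : ∀ k : ℕ, P (k + 1) * y ^ (k + 1) = R k * y ^ k * y := by
      intro k
      have h14 := cseq_rec (τ := τ) hQ hden k
      have hτ' : τ * τ⁻¹ = 1 := mul_inv_cancel₀ hτ
      have hco : P (k + 1) = R k := by
        rw [hP, hR]
        simp only []
        rw [← hc] at h14
        linear_combination h14 + c k * w ^ 2 * (Q ^ k) ^ 2 * hτ'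
      rw [hco]; ring
    rw [hP0, zero_add, tsum_congr hstep, tsum_mul_right]
  have hPs : ∑' k, P k * y ^ k =
      Sfun Q τ w y + w ^ 2 * Sfun Q τ w (Q ^ 2 * y) - (w ^ 2 + 1) * Sfun Q τ w (Q * y) := by
    have e : ∀ k, P k * y ^ k =
        c k * y ^ k + w ^ 2 * (c k * (Q ^ 2 * y) ^ k) - (w ^ 2 + 1) * (c k * (Q * y) ^ k) := by
      intro k; rw [hP]; ring
    rw [tsum_congr e, Summable.tsum_sub (h1.add ((h2.mul_left _))) (h3.mul_left _),
      Summable.tsum_add h1 (h2.mul_left _), tsum_mul_left, tsum_mul_left]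
    rfl
  have hRs : ∑' k, R k * y ^ k =
      Sfun Q τ w y + w ^ 2 * Sfun Q τ w (Q ^ 2 * y) - w * (τ + τ⁻¹) * Sfun Q τ w (Q * y) := by
    have e : ∀ k, R k * y ^ k =
        c k * y ^ k + w ^ 2 * (c k * (Q ^ 2 * y) ^ k) - w * (τ + τ⁻¹) * (c k * (Q * y) ^ k) := by
      intro k; rw [hR]; ring
    rw [tsum_congr e, Summable.tsum_sub (h1.add ((h2.mul_left _))) (h3.mul_left _),
      Summable.tsum_add h1 (h2.mul_left _), tsum_mul_left, tsum_mul_left]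
    rfl
  rw [hPs, hRs] at key
  linear_combination key

lemma G_step {Q : ℂ} (hQ : ‖Q‖ < 1) {τ z : ℂ} (hτ : τ ≠ 0) (hz : z ≠ 0)
    (hdz : ∀ j : ℕ, 1 - (Q * z ^ 2) * Q ^ j ≠ 0)
    (hdw : ∀ j : ℕ, 1 - (Q * z⁻¹ ^ 2) * Q ^ j ≠ 0) {y : ℂ} (hy : ‖y‖ < 1) :
    z⁻¹ * Sfun Q τ z y * Sfun Q τ z⁻¹ (Q * y) - z * Sfun Q τ z (Q * y) * Sfun Q τ z⁻¹ y =
      z⁻¹ * Sfun Q τ z (Q * y) * Sfun Q τ z⁻¹ (Q * (Q * y)) -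
        z * Sfun Q τ z (Q * (Q * y)) * Sfun Q τ z⁻¹ (Q * y) := by
  have hQQ : Q * (Q * y) = Q ^ 2 * y := by ring
  rw [hQQ]
  have E1 := func_eq hQ hτ hdz hy
  have E2 := func_eq hQ hτ hdw hy
  have hz' : z * z⁻¹ = 1 := mul_inv_cancel₀ hz
  have h1y : (1 : ℂ) - y ≠ 0 := one_sub_ne_zero_of_norm_lt hy
  set Az := Sfun Q τ z y
  set Bz := Sfun Q τ z (Q ^ 2 * y)
  set Cz := Sfun Q τ z (Q * y)
  set Aw := Sfun Q τ z⁻¹ y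
  set Bw := Sfun Q τ z⁻¹ (Q ^ 2 * y)
  set Cw := Sfun Q τ z⁻¹ (Q * y)
  have key : (1 - y) * ((z⁻¹ * Az * Cw - z * Cz * Aw) - (z⁻¹ * Cz * Bw - z * Bz * Cw)) = 0 := by
    linear_combination (z⁻¹ * Cw) * E1 - (z * Cz) * E2 +
      ((1 - y) * (z⁻¹ * Cz * Bw - z * Bz * Cw) + Cz * Cw * (z - z⁻¹)) * hz'
  rcases mul_eq_zero.mp key with h | h
  · exact absurd h h1y
  · linear_combination h

lemma Sfun_tendsto {Q : ℂ} (τ w : ℂ) {M r : ℝ} (hM0 : 0 ≤ M) (hr : r < 1)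
    (hM : ∀ k, ‖cseq Q τ w k‖ ≤ M) {x : ℕ → ℂ} (hx0 : Tendsto x atTop (nhds 0))
    (hxr : ∀ m, ‖x m‖ ≤ r) : Tendsto (fun m => Sfun Q τ w (x m)) atTop (nhds 1) := by
  have hr0 : (0 : ℝ) ≤ r := (norm_nonneg (x 0)).trans (hxr 0)
  have key : ∀ u : ℂ, ‖u‖ ≤ r → ‖Sfun Q τ w u - 1‖ ≤ M / (1 - r) * ‖u‖ := by
    intro u hu
    have hu1 : ‖u‖ < 1 := lt_of_le_of_lt hu hr
    have hsum : Summable fun k => cseq Q τ w k * u ^ k := summable_aux hM hu1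
    have hS : Sfun Q τ w u - 1 = ∑' k : ℕ, cseq Q τ w (k + 1) * u ^ (k + 1) := by
      rw [Sfun, Summable.tsum_eq_zero_add hsum, cseq_zero]
      simp
    rw [hS]
    have hgeom : Summable fun k : ℕ => M * ‖u‖ * r ^ k :=
      (summable_geometric_of_lt_one hr0 hr).mul_left _
    have hb : ∀ k : ℕ, ‖cseq Q τ w (k + 1) * u ^ (k + 1)‖ ≤ M * ‖u‖ * r ^ k := by
      intro k
      rw [norm_mul, norm_pow, pow_succ]
      calc ‖cseq Q τ w (k + 1)‖ * (‖u‖ ^ k * ‖u‖) ≤ M * (‖u‖ ^ k * ‖u‖) :=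
            mul_le_mul_of_nonneg_right (hM _) (by positivity)
        _ ≤ M * (r ^ k * ‖u‖) := mul_le_mul_of_nonneg_left
            (mul_le_mul_of_nonneg_right (pow_le_pow_left₀ (norm_nonneg _) hu k) (norm_nonneg _)) hM0
        _ = M * ‖u‖ * r ^ k := by ring
    calc ‖∑' k : ℕ, cseq Q τ w (k + 1) * u ^ (k + 1)‖ ≤ ∑' k : ℕ, M * ‖u‖ * r ^ k :=
          tsum_of_norm_bounded hgeom.hasSum hb
      _ = M * ‖u‖ * (1 - r)⁻¹ := by
          rw [show (fun k : ℕ => M * ‖u‖ * r ^ k) = fun k : ℕ => (M * ‖u‖) * r ^ k from rfl,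
            tsum_mul_left, tsum_geometric_of_lt_one hr0 hr]
      _ = M / (1 - r) * ‖u‖ := by rw [div_eq_mul_inv]; ring
  have h0 : Tendsto (fun m => Sfun Q τ w (x m) - 1) atTop (nhds 0) := by
    apply squeeze_zero_norm (fun m => key (x m) (hxr m))
    have := hx0.norm.const_mul (M / (1 - r))
    simpa using this
  have := h0.add (tendsto_const_nhds (x := (1 : ℂ)))
  simpa using this

lemma psiAux_eq (Q α w τ : ℂ) (n : ℕ) :
    psiAux Q α w τ (n : ℤ) = w ^ n * qPochInf (Q * w ^ 2) Q * Sfun Q τ w (α * Q ^ (n + 1)) := by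
  rw [psiAux, show ((n : ℤ) + 1) = ((n + 1 : ℕ) : ℤ) by push_cast; ring, zpow_natCast,
    zpow_natCast]
  rfl

theorem stmt_6 (q : ℝ) (hq : q ∈ Set.Ioo (0 : ℝ) 1) (α β z τ : ℂ)
    (hα : ‖α‖ < 1) (hz : z ≠ 0) (hτ : τ ≠ 0)
    (hrel : α * τ + α * τ⁻¹ = β * z + β * z⁻¹) :
    ∀ n : ℕ,
      psiAux (q : ℂ) α z τ n * psiAux (q : ℂ) α z⁻¹ τ (n + 1) -
        psiAux (q : ℂ) α z τ (n + 1) * psiAux (q : ℂ) α z⁻¹ τ n =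
      z⁻¹ * qPochInf (z ^ 2) (q : ℂ) * qPochInf ((q : ℂ) * z⁻¹ ^ 2) (q : ℂ) := by
  intro n
  obtain ⟨hq0, hq1⟩ := hq
  set Q : ℂ := (q : ℂ) with hQdef
  have hQ : ‖Q‖ < 1 := by
    rw [hQdef, Complex.norm_real, Real.norm_eq_abs, abs_of_pos hq0]
    exact hq1
  have hcast : ∀ m : ℕ, ((m : ℤ) + 1) = ((m + 1 : ℕ) : ℤ) := fun m => by push_cast; ring
  -- rewrite the psiAux's
  have hψ : ∀ (w : ℂ) (m : ℕ), psiAux Q α w τ ((m : ℤ) + 1) =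
      w ^ (m + 1) * qPochInf (Q * w ^ 2) Q * Sfun Q τ w (α * Q ^ (m + 2)) := by
    intro w m
    rw [hcast m, psiAux_eq]
  by_cases hd : (∀ j : ℕ, 1 - (Q * z ^ 2) * Q ^ j ≠ 0) ∧ (∀ j : ℕ, 1 - (Q * z⁻¹ ^ 2) * Q ^ j ≠ 0)
  · obtain ⟨hdz, hdw⟩ := hd
    obtain ⟨Mz, hMz0, hMz⟩ := cseq_bound hQ τ z hdz
    obtain ⟨Mw, hMw0, hMw⟩ := cseq_bound hQ τ z⁻¹ hdw
    have hα' : ‖α‖ < 1 := hα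
    have hxr : ∀ m : ℕ, ‖α * Q ^ (m + 1)‖ ≤ ‖α‖ := by
      intro m
      rw [norm_mul, norm_pow]
      calc ‖α‖ * ‖Q‖ ^ (m + 1) ≤ ‖α‖ * 1 :=
            mul_le_mul_of_nonneg_left (pow_le_one₀ (norm_nonneg _) hQ.le) (norm_nonneg _)
        _ = ‖α‖ := by ring
    have hxlt : ∀ m : ℕ, ‖α * Q ^ (m + 1)‖ < 1 := fun m => lt_of_le_of_lt (hxr m) hα'
    set g : ℕ → ℂ := fun m =>
      z⁻¹ * Sfun Q τ z (α * Q ^ (m + 1)) * Sfun Q τ z⁻¹ (α * Q ^ (m + 2)) -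
        z * Sfun Q τ z (α * Q ^ (m + 2)) * Sfun Q τ z⁻¹ (α * Q ^ (m + 1)) with hg
    have hgstep : ∀ m, g m = g (m + 1) := by
      intro m
      have h := G_step hQ hτ hz hdz hdw (hxlt m)
      rw [show Q * (α * Q ^ (m + 1)) = α * Q ^ (m + 2) by ring] at h
      rw [show Q * (α * Q ^ (m + 2)) = α * Q ^ (m + 3) by ring] at h
      rw [hg]
      simpa using h
    have hgconst : ∀ m, g m = g 0 := by
      intro m
      induction m with
      | zero => rfl
      | succ k ih => rw [← hgstep k, ih]
    have hx0 : ∀ j : ℕ, Tendsto (fun m : ℕ => α * Q ^ (m + j)) atTop (nhds 0) := by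
      intro j
      have h := (tendsto_pow_atTop_nhds_zero_of_norm_lt_one hQ).const_mul α
      have h2 := h.comp (tendsto_add_atTop_nat j)
      simpa [Function.comp_def] using h2
    have t1 := Sfun_tendsto (Q := Q) τ z hMz0.le hα' hMz (hx0 1) (fun m => hxr m)
    have t2 : Tendsto (fun m : ℕ => Sfun Q τ z (α * Q ^ (m + 2))) atTop (nhds 1) := by
      apply Sfun_tendsto (Q := Q) τ z hMz0.le hα' hMz (hx0 2)
      intro m
      have := hxr (m + 1)
      simpa [add_assoc] using this
    have t3 := Sfun_tendsto (Q := Q) τ z⁻¹ hMw0.le hα' hMw (hx0 1) (fun m => hxr m)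
    have t4 : Tendsto (fun m : ℕ => Sfun Q τ z⁻¹ (α * Q ^ (m + 2))) atTop (nhds 1) := by
      apply Sfun_tendsto (Q := Q) τ z⁻¹ hMw0.le hα' hMw (hx0 2)
      intro m
      have := hxr (m + 1)
      simpa [add_assoc] using this
    have hglim : Tendsto g atTop (nhds (z⁻¹ * 1 * 1 - z * 1 * 1)) := by
      rw [hg]
      exact ((tendsto_const_nhds.mul t1).mul t4).sub ((tendsto_const_nhds.mul t2).mul t3)
    have hgval : g n = z⁻¹ - z := by
      have h1 : Tendsto g atTop (nhds (g 0)) := by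
        have : g = fun _ => g 0 := funext hgconst
        rw [this]
        exact tendsto_const_nhds
      have h2 := tendsto_nhds_unique h1 hglim
      rw [hgconst n, h2]
      ring
    -- now compute both sides
    rw [hψ z n, hψ z⁻¹ n, psiAux_eq, psiAux_eq]
    set Cz := qPochInf (Q * z ^ 2) Q
    set Cw := qPochInf (Q * z⁻¹ ^ 2) Q
    have hz' : z * z⁻¹ = 1 := mul_inv_cancel₀ hz
    have hzp : (z⁻¹) ^ n * z ^ n = 1 := by
      rw [← mul_pow, inv_mul_cancel₀ hz, one_pow]
    have hLHS : z ^ n * Cz * Sfun Q τ z (α * Q ^ (n + 1)) *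
          (z⁻¹ ^ (n + 1) * Cw * Sfun Q τ z⁻¹ (α * Q ^ (n + 2))) -
        z ^ (n + 1) * Cz * Sfun Q τ z (α * Q ^ (n + 2)) *
          (z⁻¹ ^ n * Cw * Sfun Q τ z⁻¹ (α * Q ^ (n + 1))) = Cz * Cw * g n := by
      rw [hg]
      have h1 : z ^ n * z⁻¹ ^ (n + 1) = z⁻¹ := by
        rw [pow_succ]
        linear_combination z⁻¹ * hzp
      have h2 : z ^ (n + 1) * z⁻¹ ^ n = z := by
        rw [pow_succ]
        linear_combination z * hzp
      linear_combination
        (Cz * Cw * Sfun Q τ z (α * Q ^ (n + 1)) * Sfun Q τ z⁻¹ (α * Q ^ (n + 2))) * h1 -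
        (Cz * Cw * Sfun Q τ z (α * Q ^ (n + 2)) * Sfun Q τ z⁻¹ (α * Q ^ (n + 1))) * h2
    rw [hLHS, hgval]
    rw [qPochInf_split hQ (z ^ 2), show z ^ 2 * Q = Q * z ^ 2 from mul_comm _ _]
    linear_combination Cz * Cw * z * hz'
  · -- degenerate case
    push_neg at hd
    have hLHS0 : ∀ (w : ℂ), qPochInf (Q * w ^ 2) Q = 0 →
        ∀ m : ℤ, psiAux Q α w τ m = 0 := by
      intro w h0 m
      rw [psiAux, h0]
      ring
    by_cases hdz : ∀ j : ℕ, 1 - (Q * z ^ 2) * Q ^ j ≠ 0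
    · -- then the z⁻¹ side degenerates
      obtain ⟨j0, hj0'⟩ := hd hdz
      have hCw : qPochInf (Q * z⁻¹ ^ 2) Q = 0 := tprod_eq_zero j0 hj0'
      rw [hLHS0 z⁻¹ hCw, hLHS0 z⁻¹ hCw, hCw]
      ring
    · obtain ⟨j0, hj0⟩ := not_forall.mp hdz
      have hj0' : 1 - (Q * z ^ 2) * Q ^ j0 = 0 := not_not.mp hj0
      have hCz : qPochInf (Q * z ^ 2) Q = 0 := tprod_eq_zero j0 hj0'
      have hRz : qPochInf (z ^ 2) Q = 0 := by
        apply tprod_eq_zero (j0 + 1)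
        rw [show (1 : ℂ) - z ^ 2 * Q ^ (j0 + 1) = 1 - (Q * z ^ 2) * Q ^ j0 by ring]
        exact hj0'
      rw [hLHS0 z hCz, hLHS0 z hCz, hRz]
      ring
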